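/- Let A ∈ B(E,F) have generalized inverse A⁺ and T ∈ B(E,F) with ‖T − A‖ < ‖A⁺‖⁻¹. Then C_A(A⁺,T)⁻¹ T (N(A)) ⊆ R(A) if and only if (I_E − A⁺A)(N(T)) = N(A). -/

import Mathlib

open ContinuousLinearMap

variable {E F : Type*} [NormedAddCommGroup E] [NormedSpace ℝ E] [CompleteSpace E]
  [NormedAddCommGroup F] [NormedSpace ℝ F] [CompleteSpace F]

theorem stmt6 (A T : E →L[ℝ] F) (Ap : F →L[ℝ] E)
    (h1 : A ∘L (Ap ∘L A) = A) (h2 : Ap ∘L (A ∘L Ap) = Ap)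
    (hT : ‖T - A‖ < ‖Ap‖⁻¹) :
    Submodule.map ((Ring.inverse (ContinuousLinearMap.id ℝ F + (T - A) ∘L Ap) ∘L T : E →L[ℝ] F) : E →ₗ[ℝ] F)
        (LinearMap.ker (A : E →ₗ[ℝ] F)) ≤ LinearMap.range (A : E →ₗ[ℝ] F) ↔
      Submodule.map ((ContinuousLinearMap.id ℝ E - Ap ∘L A : E →L[ℝ] E) : E →ₗ[ℝ] E) (LinearMap.ker (T : E →ₗ[ℝ] F)) =
        LinearMap.ker (A : E →ₗ[ℝ] F) := by
  set C : F →L[ℝ] F := ContinuousLinearMap.id ℝ F + (T - A) ∘L Ap with hCdef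
  have hApnorm : 0 < ‖Ap‖ := by
    rcases (norm_nonneg Ap).lt_or_eq with h | h
    · exact h
    · exfalso
      rw [← h] at hT
      simp at hT
      linarith [norm_nonneg (T - A)]
  have hlt : ‖(T - A) ∘L Ap‖ < 1 := by
    calc ‖(T - A) ∘L Ap‖ ≤ ‖T - A‖ * ‖Ap‖ := opNorm_comp_le _ _
      _ < ‖Ap‖⁻¹ * ‖Ap‖ := by exact mul_lt_mul_of_pos_right hT hApnorm
      _ = 1 := inv_mul_cancel₀ (ne_of_gt hApnorm)
  have hC : IsUnit C := by
    have h : IsUnit ((1 : F →L[ℝ] F) - -((T - A) ∘L Ap)) :=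
      (Units.oneSub (-((T - A) ∘L Ap)) (by rw [norm_neg]; exact hlt)).isUnit
    have heq : (1 : F →L[ℝ] F) - -((T - A) ∘L Ap) = C := by
      ext y; simp [hCdef]; abel
    rwa [heq] at h
  have h1' : ∀ x, A (Ap (A x)) = A x := fun x => by
    have := ContinuousLinearMap.ext_iff.mp h1 x
    simpa using this
  have hkey : ∀ x, T (Ap (A x)) = C (A x) := by
    intro x
    simp only [hCdef, add_apply, comp_apply, id_apply, sub_apply]
    rw [h1' x]; abel
  have hCiC : ∀ y, Ring.inverse C (C y) = y := by
    intro y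
    have h := Ring.inverse_mul_cancel C hC
    have := ContinuousLinearMap.ext_iff.mp h y
    simpa [ContinuousLinearMap.mul_apply] using this
  have hCCi : ∀ y, C (Ring.inverse C y) = y := by
    intro y
    have h := Ring.mul_inverse_cancel C hC
    have := ContinuousLinearMap.ext_iff.mp h y
    simpa [ContinuousLinearMap.mul_apply] using this
  constructor
  · intro h
    apply le_antisymm
    · rintro _ ⟨z, hz, rfl⟩
      simp only [LinearMap.mem_ker] at hz ⊢
      simp only [ContinuousLinearMap.coe_coe, sub_apply, comp_apply, id_apply, map_sub]
      rw [h1' z]; abel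
    · intro x hx
      simp only [LinearMap.mem_ker, ContinuousLinearMap.coe_coe] at hx
      have hmem : (Ring.inverse C ∘L T) x ∈ LinearMap.range (A : E →ₗ[ℝ] F) := by
        apply h
        exact Submodule.mem_map.mpr ⟨x, hx, rfl⟩
      obtain ⟨u, hu⟩ := hmem
      rw [ContinuousLinearMap.coe_coe] at hu
      refine Submodule.mem_map.mpr ⟨x - Ap (A u), ?_, ?_⟩
      · simp only [LinearMap.mem_ker, ContinuousLinearMap.coe_coe, map_sub]
        rw [hkey u]
        have hCu : C (A u) = T x := by
          rw [hu, comp_apply, hCCi]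
        rw [hCu]; abel
      · simp only [ContinuousLinearMap.coe_coe, sub_apply, comp_apply, id_apply, map_sub]
        rw [hx, h1' u]
        simp
  · intro h
    rintro _ ⟨x, hx, rfl⟩
    rw [← h] at hx
    obtain ⟨z, hz, rfl⟩ := Submodule.mem_map.mp hx
    simp only [LinearMap.mem_ker, ContinuousLinearMap.coe_coe] at hz
    refine ⟨-z, ?_⟩
    simp only [ContinuousLinearMap.coe_coe, comp_apply, sub_apply, id_apply, map_sub]
    rw [hz, hkey z, hCiC]
    simp
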